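/- Let W(x,y) := e^{−x−y} 1_{x ≥ 0} 1_{y ≥ 0} and consider W₁ = W on S₁ = [−a, ∞) and W₂ = W on S₂ = [0, ∞) (with Lebesgue measure, a > 0). Then there is no coupling (φ₁, φ₂) of S₁ and S₂ (measure-preserving maps φᵢ : S → Sᵢ from a common σ-finite measure space) such that W₁∘(φ₁×φ₁) = W₂∘(φ₂×φ₂) almost everywhere. -/

import Mathlib

open MeasureTheory Filter Topology

theorem no_exact_coupling (a : ℝ) (ha : 0 < a)
    (W : ℝ × ℝ → ℝ)
    (hW : ∀ q, W q = if 0 ≤ q.1 ∧ 0 ≤ q.2 then Real.exp (-q.1 - q.2) else 0)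
    (S : Type*) [MeasurableSpace S] (μ : Measure S) [SigmaFinite μ]
    (φ₁ φ₂ : S → ℝ)
    (hφ₁ : MeasurePreserving φ₁ μ (volume.restrict (Set.Ici (-a))))
    (hφ₂ : MeasurePreserving φ₂ μ (volume.restrict (Set.Ici (0:ℝ)))) :
    ¬ ((fun q : S × S => W (φ₁ q.1, φ₁ q.2)) =ᵐ[μ.prod μ]
        fun q : S × S => W (φ₂ q.1, φ₂ q.2)) := by
  intro h
  -- a.e., φ₂ ≥ 0
  have hA : μ (φ₂ ⁻¹' Set.Iio 0) = 0 := by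
    rw [hφ₂.measure_preimage measurableSet_Iio.nullMeasurableSet,
      Measure.restrict_apply measurableSet_Iio]
    rw [Set.Iio_inter_Ici, Set.Ico_self]
    simp
  have hφ₂pos : ∀ᵐ x ∂μ, 0 ≤ φ₂ x := by
    rw [ae_iff]
    convert hA using 2
    ext x; simp [Set.mem_preimage, not_le]
  -- lift to product
  have hfst : ∀ᵐ q ∂(μ.prod μ), 0 ≤ φ₂ q.1 := by
    rw [ae_iff]
    have : {q : S × S | ¬ 0 ≤ φ₂ q.1} = (φ₂ ⁻¹' Set.Iio 0) ×ˢ Set.univ := by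
      ext q; simp [not_le]
    rw [this, Measure.prod_prod, hA, zero_mul]
  have hsnd : ∀ᵐ q ∂(μ.prod μ), 0 ≤ φ₂ q.2 := by
    rw [ae_iff]
    have : {q : S × S | ¬ 0 ≤ φ₂ q.2} = Set.univ ×ˢ (φ₂ ⁻¹' Set.Iio 0) := by
      ext q; simp [not_le]
    rw [this, Measure.prod_prod, hA, mul_zero]
  -- a.e. φ₁ q.1 ≥ 0
  have key : ∀ᵐ q ∂(μ.prod μ), 0 ≤ φ₁ q.1 := by
    filter_upwards [h, hfst, hsnd] with q heq h1 h2
    by_contra hneg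
    rw [hW, hW] at heq
    simp only [h1, h2, and_self, if_true] at heq
    rw [if_neg (by push_neg; intro h'; exact absurd h' hneg)] at heq
    exact absurd heq.symm (ne_of_gt (Real.exp_pos _))
  -- but φ₁ lands in [-a, 0) with measure a > 0
  have hN : μ (φ₁ ⁻¹' Set.Ico (-a) 0) = ENNReal.ofReal a := by
    rw [hφ₁.measure_preimage measurableSet_Ico.nullMeasurableSet,
      Measure.restrict_apply measurableSet_Ico]
    have : Set.Ico (-a) (0:ℝ) ∩ Set.Ici (-a) = Set.Ico (-a) 0 := by
      ext x; simp (config := {contextual := true}) [Set.mem_Ico]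
    rw [this, Real.volume_Ico]
    norm_num
  rw [ae_iff] at key
  have hsub : (φ₁ ⁻¹' Set.Ico (-a) 0) ×ˢ (φ₁ ⁻¹' Set.Ico (-a) 0)
      ⊆ {q : S × S | ¬ 0 ≤ φ₁ q.1} := by
    rintro ⟨x, y⟩ ⟨hx, _⟩
    exact not_le.mpr hx.2
  have : (μ.prod μ) ((φ₁ ⁻¹' Set.Ico (-a) 0) ×ˢ (φ₁ ⁻¹' Set.Ico (-a) 0)) = 0 :=
    le_antisymm (key ▸ measure_mono hsub) zero_le
  rw [Measure.prod_prod, hN] at this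
  have : ENNReal.ofReal a = 0 := by
    rcases mul_eq_zero.mp this with h' | h' <;> exact h'
  rw [ENNReal.ofReal_eq_zero] at this
  exact absurd this (not_le.mpr ha)
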